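/- Let 𝔥 be the 8-dimensional real two-step nilpotent Lie algebra with basis (X_1,…,X_6, Z_1, Z_2) and nontrivial brackets [X_1,X_5] = [X_2,X_3] = Z_1 and [X_1,X_6] = [X_2,X_4] = Z_2. Then ICor(𝔥*) = 𝔷^⊥ = {f ∈ 𝔥* : f(Z_1) = f(Z_2) = 0}, and Cor(𝔥*) is strictly contained in ICor(𝔥*): there exists f ∈ 𝔷^⊥ with f(X_3)f(X_6) ≠ f(X_4)f(X_5), hence f ∉ Cor(𝔥*). -/

import Mathlib

/-- The coadjoint action of the Lie algebra: `(coad X f) W = f ⁅W, X⁆`. -/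
def coad {L : Type*} [LieRing L] [LieAlgebra ℝ L] (X : L) (f : Module.Dual ℝ L) :
    Module.Dual ℝ L where
  toFun W := f ⁅W, X⁆
  map_add' a b := by simp [add_lie]
  map_smul' c a := by simp [smul_lie]

/-- The set `{ad*_X ℓ : X ∈ 𝔤, ℓ ∈ 𝔤*}` of all coadjoint tangent vectors. -/
def adStar (L : Type*) [LieRing L] [LieAlgebra ℝ L] : Set (Module.Dual ℝ L) :=
  {g | ∃ (X : L) (ℓ : Module.Dual ℝ L), g = coad X ℓ}

/-- Coordinates of a linear functional with respect to the dual basis of `B`;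
this identifies `𝔤*` with `ι → ℝ`, carrying the canonical topology. -/
noncomputable def coords {ι : Type*} {L : Type*} [LieRing L] [LieAlgebra ℝ L]
    (B : Module.Basis ι ℝ L) (f : Module.Dual ℝ L) : ι → ℝ := fun a => f (B a)

/-- The cortex `Cor(𝔤*)`: the closure (in the canonical topology of the
finite-dimensional space `𝔤*`, transported to coordinates via the dual basis)
of the set `{ad*_X ℓ : X ∈ 𝔤, ℓ ∈ 𝔤*}`. -/
def corSet {ι : Type*} {L : Type*} [LieRing L] [LieAlgebra ℝ L] (B : Module.Basis ι ℝ L) :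
    Set (Module.Dual ℝ L) :=
  {f | coords B f ∈ closure (coords B '' adStar L)}

/-- Structure constants of the 8-dimensional Lie algebra `𝔥`: basis indices
`0,…,5` are `X_1,…,X_6`, index `6` is `Z_1`, index `7` is `Z_2`; the only
nontrivial brackets are `⁅X_1,X_5⁆ = ⁅X_2,X_3⁆ = Z_1`, `⁅X_1,X_6⁆ = ⁅X_2,X_4⁆ = Z_2`. -/
def hBr {V : Type*} [AddCommGroup V] (B : Fin 8 → V) : Fin 8 → Fin 8 → V :=
  fun i j =>
    if i = 0 ∧ j = 4 ∨ i = 1 ∧ j = 2 then B 6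
    else if i = 4 ∧ j = 0 ∨ i = 2 ∧ j = 1 then -B 6
    else if i = 0 ∧ j = 5 ∨ i = 1 ∧ j = 3 then B 7
    else if i = 5 ∧ j = 0 ∨ i = 3 ∧ j = 1 then -B 7
    else 0

/-- values of `ℓ ⁅B j, X⁆` in coordinates -/
def coadVec (c : Fin 8 → ℝ) (z1 z2 : ℝ) : Fin 8 → ℝ := fun j =>
  if j = 0 then c 4 * z1 + c 5 * z2
  else if j = 1 then c 2 * z1 + c 3 * z2
  else if j = 2 then -(c 1 * z1)
  else if j = 3 then -(c 1 * z2)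
  else if j = 4 then -(c 0 * z1)
  else if j = 5 then -(c 0 * z2)
  else 0

def vec8 (v0 v1 v2 v3 v4 v5 v6 v7 : ℝ) : Fin 8 → ℝ := fun j =>
  if j = 0 then v0 else if j = 1 then v1 else if j = 2 then v2 else if j = 3 then v3
  else if j = 4 then v4 else if j = 5 then v5 else if j = 6 then v6 else v7

section helpers
variable {H : Type} [LieRing H] [LieAlgebra ℝ H]

lemma brX (B : Module.Basis (Fin 8) ℝ H)
    (hbr : ∀ i j : Fin 8, ⁅B i, B j⁆ = hBr (fun k => B k) i j)
    (X : H) (ℓ : Module.Dual ℝ H) (j : Fin 8) :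
    ℓ ⁅B j, X⁆ = coadVec (fun i => B.repr X i) (ℓ (B 6)) (ℓ (B 7)) j := by
  have key : ∀ c : Fin 8 → ℝ,
      ℓ ⁅B j, ∑ i, c i • B i⁆ = coadVec c (ℓ (B 6)) (ℓ (B 7)) j := by
    intro c
    have h1 : ⁅B j, ∑ i, c i • B i⁆ = LieAlgebra.ad ℝ H (B j) (∑ i, c i • B i) := rfl
    rw [h1, map_sum, map_sum]
    simp only [map_smul, LieAlgebra.ad_apply, hbr, smul_eq_mul]
    rw [Fin.sum_univ_eight]
    fin_cases j <;>
      · simp (config := { decide := true }) only [hBr, coadVec, if_true, if_false]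
        simp only [map_neg, map_zero, map_smul, smul_eq_mul, mul_zero, mul_neg, zero_add,
          add_zero, neg_zero]
        try ring
  have := key (fun i => B.repr X i)
  rwa [B.sum_repr X] at this

lemma coords_coad (B : Module.Basis (Fin 8) ℝ H)
    (hbr : ∀ i j : Fin 8, ⁅B i, B j⁆ = hBr (fun k => B k) i j)
    (X : H) (ℓ : Module.Dual ℝ H) :
    coords B (coad X ℓ) = coadVec (fun i => B.repr X i) (ℓ (B 6)) (ℓ (B 7)) := by
  funext j
  exact brX B hbr X ℓ j

lemma closure_props (B : Module.Basis (Fin 8) ℝ H)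
    (hbr : ∀ i j : Fin 8, ⁅B i, B j⁆ = hBr (fun k => B k) i j) :
    ∀ v ∈ closure (coords B '' adStar H), v 6 = 0 ∧ v 7 = 0 ∧ v 2 * v 5 - v 3 * v 4 = 0 := by
  have hsub : coords B '' adStar H ⊆
      {v : Fin 8 → ℝ | v 6 = 0 ∧ v 7 = 0 ∧ v 2 * v 5 - v 3 * v 4 = 0} := by
    rintro v ⟨g, ⟨X, ℓ, rfl⟩, rfl⟩
    rw [coords_coad B hbr]
    refine ⟨?_, ?_, ?_⟩ <;>
      · simp (config := { decide := true }) only [coadVec, if_true, if_false]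
        try ring
  have hcl : IsClosed {v : Fin 8 → ℝ | v 6 = 0 ∧ v 7 = 0 ∧ v 2 * v 5 - v 3 * v 4 = 0} := by
    refine IsClosed.inter (isClosed_eq (continuous_apply 6) continuous_const) ?_
    refine IsClosed.inter (isClosed_eq (continuous_apply 7) continuous_const) ?_
    exact isClosed_eq (by fun_prop) continuous_const
  exact fun v hv => closure_minimal hsub hcl hv

lemma cont_vec8t (v0 v1 v2 v3 v4 v5 v7 : ℝ) :
    Continuous fun t : ℝ => vec8 v0 v1 v2 v3 v4 v5 t v7 := by
  apply continuous_pi; intro j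
  fin_cases j <;> simp (config := { decide := true }) only [vec8, if_true, if_false] <;>
    first | exact continuous_const | exact continuous_id

lemma cont_vec8s (v0 v1 v2 v3 v4 v5 v6 : ℝ) :
    Continuous fun s : ℝ => vec8 v0 v1 v2 v3 v4 v5 v6 s := by
  apply continuous_pi; intro j
  fin_cases j <;> simp (config := { decide := true }) only [vec8, if_true, if_false] <;>
    first | exact continuous_const | exact continuous_id

lemma realKey (q : (Fin 8 → ℝ) → ℝ) (hq : Continuous q)
    (hK : ∀ a x : Fin 8 → ℝ, q (fun j => a j + coadVec x (a 6) (a 7) j) = q a)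
    (a : Fin 8 → ℝ) (h6 : a 6 = 0) (h7 : a 7 = 0) :
    q a = q (fun _ => 0) := by
  -- Step 1 : q a = q (vec8 0 0 0 (a 3) 0 (a 5) 0 0)
  have step1 : q a = q (vec8 0 0 0 (a 3) 0 (a 5) 0 0) := by
    have heq : ∀ t : ℝ, t ≠ 0 →
        q (vec8 0 0 0 (a 3) 0 (a 5) t 0) = q (vec8 (a 0) (a 1) (a 2) (a 3) (a 4) (a 5) t 0) := by
      intro t ht
      have h := hK (vec8 (a 0) (a 1) (a 2) (a 3) (a 4) (a 5) t 0)
        (vec8 (a 4/t) (a 2/t) (-(a 1)/t) 0 (-(a 0)/t) 0 0 0)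
      rw [← h]
      congr 1
      funext j
      fin_cases j <;>
        · simp (config := { decide := true }) only [vec8, coadVec, if_true, if_false]
          (try field_simp) <;> ring_nf
    have hfun : (fun t : ℝ => q (vec8 0 0 0 (a 3) 0 (a 5) t 0))
        = fun t : ℝ => q (vec8 (a 0) (a 1) (a 2) (a 3) (a 4) (a 5) t 0) := by
      apply Continuous.ext_on (dense_compl_singleton (0:ℝ))
        (hq.comp (cont_vec8t _ _ _ _ _ _ _)) (hq.comp (cont_vec8t _ _ _ _ _ _ _))
      intro t ht
      exact heq t ht
    have h0 := congrFun hfun 0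
    have haeq : vec8 (a 0) (a 1) (a 2) (a 3) (a 4) (a 5) (0:ℝ) 0 = a := by
      funext j
      fin_cases j <;>
        simp (config := { decide := true }) only [vec8, if_true, if_false] <;>
        simp [h6, h7]
    rw [haeq] at h0
    exact h0.symm
  -- Step 2 : kill a 3 and a 5 using the second central direction
  have step2 : q (vec8 0 0 0 (a 3) 0 (a 5) 0 0) = q (vec8 0 0 0 0 0 0 0 0) := by
    have heq : ∀ s : ℝ, s ≠ 0 →
        q (vec8 0 0 0 0 0 0 0 s) = q (vec8 0 0 0 (a 3) 0 (a 5) 0 s) := by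
      intro s hs
      have h := hK (vec8 0 0 0 (a 3) 0 (a 5) 0 s)
        (vec8 (a 5/s) (a 3/s) 0 0 0 0 0 0)
      rw [← h]
      congr 1
      funext j
      fin_cases j <;>
        · simp (config := { decide := true }) only [vec8, coadVec, if_true, if_false]
          (try field_simp) <;> ring_nf
    have hfun : (fun s : ℝ => q (vec8 0 0 0 0 0 0 0 s))
        = fun s : ℝ => q (vec8 0 0 0 (a 3) 0 (a 5) 0 s) := by
      apply Continuous.ext_on (dense_compl_singleton (0:ℝ))
        (hq.comp (cont_vec8s _ _ _ _ _ _ _)) (hq.comp (cont_vec8s _ _ _ _ _ _ _))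
      intro s hs
      exact heq s hs
    exact (congrFun hfun 0).symm
  have hzero : vec8 0 0 0 0 0 0 0 (0:ℝ) = fun _ => 0 := by
    funext j
    fin_cases j <;> simp (config := { decide := true }) only [vec8, if_true, if_false]
  rw [step1, step2, hzero]

end helpers

/-- For the 8-dimensional Lie algebra `𝔥` as above:
`ICor(𝔥*)` (the set of `f` with `P(f) = P(0)` for every `Ad*(G)`-invariant polynomial `P`)
equals `𝔷^⊥ = {f : f(Z_1) = f(Z_2) = 0}`, and `Cor(𝔥*)` is strictly contained in it:
`Cor(𝔥*) ⊆ 𝔷^⊥` and there is `f ∈ 𝔷^⊥` with `f(X_3)f(X_6) ≠ f(X_4)f(X_5)`,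
which does not belong to `Cor(𝔥*)`. -/
theorem icor_h8 (H : Type) [LieRing H] [LieAlgebra ℝ H]
    (B : Module.Basis (Fin 8) ℝ H)
    (hbr : ∀ i j : Fin 8, ⁅B i, B j⁆ = hBr (fun k => B k) i j) :
    ({f : Module.Dual ℝ H | ∀ P : MvPolynomial (Fin 8) ℝ,
        (∀ (X : H) (ℓ : Module.Dual ℝ H),
          MvPolynomial.eval (coords B (ℓ + coad X ℓ)) P = MvPolynomial.eval (coords B ℓ) P) →
        MvPolynomial.eval (coords B f) P = MvPolynomial.eval (fun _ : Fin 8 => (0 : ℝ)) P}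
      = {f : Module.Dual ℝ H | f (B 6) = 0 ∧ f (B 7) = 0})
    ∧ corSet B ⊆ {f : Module.Dual ℝ H | f (B 6) = 0 ∧ f (B 7) = 0}
    ∧ ∃ f : Module.Dual ℝ H, f (B 6) = 0 ∧ f (B 7) = 0 ∧
        f (B 2) * f (B 5) ≠ f (B 3) * f (B 4) ∧ f ∉ corSet B := by
  have coad_app : ∀ (X : H) (ℓ : Module.Dual ℝ H) (j : Fin 8),
      coad X ℓ (B j) = coadVec (fun i => B.repr X i) (ℓ (B 6)) (ℓ (B 7)) j :=
    fun X ℓ j => brX B hbr X ℓ j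
  refine ⟨?_, ?_, ?_⟩
  · -- ICor = annihilator of the center
    ext f
    simp only [Set.mem_setOf_eq]
    constructor
    · intro h
      constructor
      · have hinv : ∀ (X : H) (ℓ : Module.Dual ℝ H),
            MvPolynomial.eval (coords B (ℓ + coad X ℓ)) (MvPolynomial.X 6)
              = MvPolynomial.eval (coords B ℓ) (MvPolynomial.X 6) := by
          intro X ℓ
          simp only [MvPolynomial.eval_X, coords, LinearMap.add_apply, coad_app]
          simp (config := { decide := true }) only [coadVec, if_true, if_false]
          ring
        have := h (MvPolynomial.X 6) hinv
        simpa [coords] using this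
      · have hinv : ∀ (X : H) (ℓ : Module.Dual ℝ H),
            MvPolynomial.eval (coords B (ℓ + coad X ℓ)) (MvPolynomial.X 7)
              = MvPolynomial.eval (coords B ℓ) (MvPolynomial.X 7) := by
          intro X ℓ
          simp only [MvPolynomial.eval_X, coords, LinearMap.add_apply, coad_app]
          simp (config := { decide := true }) only [coadVec, if_true, if_false]
          ring
        have := h (MvPolynomial.X 7) hinv
        simpa [coords] using this
    · rintro ⟨h6, h7⟩ P hP
      set q : (Fin 8 → ℝ) → ℝ := fun v => MvPolynomial.eval v P with hqdef
      have hqc : Continuous q := MvPolynomial.continuous_eval P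
      have hK : ∀ a x : Fin 8 → ℝ, q (fun j => a j + coadVec x (a 6) (a 7) j) = q a := by
        intro a x
        set ℓ : Module.Dual ℝ H := ∑ i, a i • B.coord i with hℓdef
        set X : H := ∑ i, x i • B i with hXdef
        have hℓ : coords B ℓ = a := by
          funext j
          simp only [coords, hℓdef, LinearMap.sum_apply, LinearMap.smul_apply,
            Module.Basis.coord_apply, Module.Basis.repr_self_apply, smul_eq_mul]
          simp [mul_ite, mul_one, mul_zero, Finset.sum_ite_eq]
        have hX : (fun i => (B.repr X) i) = x := by
          funext i
          rw [hXdef, Module.Basis.repr_sum_self]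
        have hc : coords B (ℓ + coad X ℓ) = fun j => a j + coadVec x (a 6) (a 7) j := by
          funext j
          show (ℓ + coad X ℓ) (B j) = _
          rw [LinearMap.add_apply, coad_app, hX]
          have e6 : ℓ (B 6) = a 6 := congrFun hℓ 6
          have e7 : ℓ (B 7) = a 7 := congrFun hℓ 7
          have ej : ℓ (B j) = a j := congrFun hℓ j
          rw [e6, e7, ej]
        have := hP X ℓ
        rw [hc, hℓ] at this
        exact this
      exact realKey q hqc hK (coords B f) h6 h7
  · -- Cor ⊆ annihilator of the center
    intro f hf
    have h := closure_props B hbr _ hf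
    exact ⟨h.1, h.2.1⟩
  · -- the witness
    refine ⟨B.coord 2 + B.coord 5, ?_, ?_, ?_, ?_⟩
    · simp (config := { decide := true }) [Module.Basis.coord_apply, Module.Basis.repr_self_apply]
    · simp (config := { decide := true }) [Module.Basis.coord_apply, Module.Basis.repr_self_apply]
    · simp (config := { decide := true }) [Module.Basis.coord_apply, Module.Basis.repr_self_apply]
    · intro hf
      have h := (closure_props B hbr _ hf).2.2
      simp only [coords, LinearMap.add_apply, Module.Basis.coord_apply, Module.Basis.repr_self_apply] at h
      simp (config := { decide := true }) only [if_true, if_false] at h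
      norm_num at h
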